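/- Let φ be a stability function on an abelian length category A inducing, via torsion classes T_{≥p} = Filt(φ-semistables of phase ≥ p), a cover T_{≥p} ⋖ T_{≥q}. Then there exists a φ-stable object N, unique up to isomorphism, whose phase lies in the equivalence class [q] = {r : T_{≥r} = T_{≥q}}; moreover N is a minimal extending object for T_{≥p} and q ≤ φ(N) < p. -/

import Mathlib

open CategoryTheory CategoryTheory.Limits

universe v u

variable {C : Type u} [Category.{v} C] [Abelian C]

/-- `f, g` form a short exact sequence `0 ⟶ X₁ ⟶ X₂ ⟶ X₃ ⟶ 0`. -/
def IsSES {X₁ X₂ X₃ : C} (f : X₁ ⟶ X₂) (g : X₂ ⟶ X₃) : Prop :=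
  ∃ w : f ≫ g = 0, (CategoryTheory.ShortComplex.mk f g w).ShortExact

/-- A torsion pair `(T, F)`. -/
structure TorsionPairOn (T F : Set C) : Prop where
  hom_zero : ∀ X ∈ T, ∀ Y ∈ F, ∀ f : X ⟶ Y, f = 0
  mem_torsion : ∀ X : C, (∀ Y ∈ F, ∀ f : X ⟶ Y, f = 0) → X ∈ T
  mem_free : ∀ Y : C, (∀ X ∈ T, ∀ f : X ⟶ Y, f = 0) → Y ∈ F

def IsoClosed (S : Set C) : Prop := ∀ ⦃X Y : C⦄, (X ≅ Y) → X ∈ S → Y ∈ S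

def ExtClosedSet (S : Set C) : Prop :=
  ∀ ⦃X₁ X₂ X₃ : C⦄ (f : X₁ ⟶ X₂) (g : X₂ ⟶ X₃), IsSES f g → X₁ ∈ S → X₃ ∈ S → X₂ ∈ S

def QuotClosed (S : Set C) : Prop :=
  ∀ ⦃X Y : C⦄ (p : X ⟶ Y), Epi p → X ∈ S → Y ∈ S

structure IsTorsionClass (T : Set C) : Prop where
  zero_mem : ∀ X : C, IsZero X → X ∈ T
  iso_closed : IsoClosed T
  ext_closed : ExtClosedSet T
  quot_closed : QuotClosed T

/-- `T'` covers `T` in the lattice of torsion classes. -/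
def CoversTC (T T' : Set C) : Prop :=
  T ⊆ T' ∧ T ≠ T' ∧
    ∀ S : Set C, IsTorsionClass S → T ⊆ S → S ⊆ T' → S = T ∨ S = T'

/-- The extension closure of a class of objects. -/
inductive ExtClosure (S : Set C) : C → Prop
  | of (X : C) (h : X ∈ S) : ExtClosure S X
  | zero (X : C) (h : IsZero X) : ExtClosure S X
  | iso (X Y : C) (e : X ≅ Y) (h : ExtClosure S X) : ExtClosure S Y
  | ext (X₁ X₂ X₃ : C) (f : X₁ ⟶ X₂) (g : X₂ ⟶ X₃) (hseq : IsSES f g)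
      (h₁ : ExtClosure S X₁) (h₃ : ExtClosure S X₃) : ExtClosure S X₂

def IsBrick (X : C) : Prop := ¬ IsZero X ∧ ∀ f : X ⟶ X, f = 0 ∨ IsIso f

def IsIndec (X : C) : Prop :=
  ¬ IsZero X ∧ ∀ (Y Z : C), (X ≅ Y ⊞ Z) → IsZero Y ∨ IsZero Z

structure IsMinimalExtending (T : Set C) (M : C) : Prop where
  proper_quot_mem : ∀ ⦃Y : C⦄ (p : M ⟶ Y), Epi p → ¬ IsIso p → Y ∈ T
  ext_mem : ∀ ⦃X Tt : C⦄ (f : M ⟶ X) (g : X ⟶ Tt), IsSES f g → Tt ∈ T →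
      (¬ ∃ r : X ⟶ M, f ≫ r = 𝟙 M) → X ∈ T
  hom_zero : ∀ ⦃W : C⦄, W ∈ T → ∀ f : W ⟶ M, f = 0

/-- A finite filtration of `X` by subobjects. -/
structure FiltrationOf (X : C) where
  len : ℕ
  obj : Fin (len + 1) → C
  map : ∀ i : Fin len, obj i.castSucc ⟶ obj i.succ
  mono : ∀ i, Mono (map i)
  zero : IsZero (obj 0)
  top : obj (Fin.last len) ≅ X

noncomputable def FiltrationOf.subquot {X : C} (F : FiltrationOf X) (i : Fin F.len) : C :=
  cokernel (F.map i)

variable {P : Type*} [LinearOrder P]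

def Semistable (φ : C → P) (M : C) : Prop :=
  ¬ IsZero M ∧ ∀ ⦃L : C⦄ (f : L ⟶ M), Mono f → ¬ IsZero L → φ L ≤ φ M

def StableObj (φ : C → P) (M : C) : Prop :=
  ¬ IsZero M ∧ ∀ ⦃L : C⦄ (f : L ⟶ M), Mono f → ¬ IsZero L → ¬ IsIso f → φ L < φ M

structure IsStabilityFunction (φ : C → P) : Prop where
  iso_invariant : ∀ ⦃X Y : C⦄, (X ≅ Y) → φ X = φ Y
  seesaw : ∀ ⦃L M N : C⦄ (f : L ⟶ M) (g : M ⟶ N), IsSES f g →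
      ¬ IsZero L → ¬ IsZero M → ¬ IsZero N →
      (φ L = φ M ∧ φ M = φ N) ∨ (φ L < φ M ∧ φ M < φ N) ∨ (φ N < φ M ∧ φ M < φ L)

/-- The torsion class of a stability function: extension closure of the
semistable objects of phase at least `p`. -/
def TgeSet {C : Type u} [Category.{v} C] [Abelian C]
    {P : Type*} [LinearOrder P] (φ : C → P) (p : P) : Set C :=
  {X : C | ExtClosure {Y : C | Semistable φ Y ∧ p ≤ φ Y} X}

/-! ### Auxiliary machinery -/

section Aux

variable {C : Type u} [Category.{v} C] [Abelian C]

section Zero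

lemma isZero_of_epi_eq_zero {X Z : C} (e : X ⟶ Z) [Epi e] (h0 : e = 0) : IsZero Z := by
  rw [IsZero.iff_id_eq_zero, ← cancel_epi e, h0, comp_zero, zero_comp]

lemma isZero_of_mono_eq_zero {U Z : C} (m : U ⟶ Z) [Mono m] (h0 : m = 0) : IsZero U := by
  rw [IsZero.iff_id_eq_zero, ← cancel_mono m, h0, comp_zero, zero_comp]

lemma isZero_target_of_epi {X Z : C} (e : X ⟶ Z) [Epi e] (hX : IsZero X) : IsZero Z :=
  isZero_of_epi_eq_zero e (hX.eq_of_src e 0)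

lemma isZero_source_of_mono {U Z : C} (m : U ⟶ Z) [Mono m] (hZ : IsZero Z) : IsZero U :=
  isZero_of_mono_eq_zero m (hZ.eq_of_tgt m 0)

lemma isIso_of_mono_of_isZero_cokernel {X Y : C} (m : X ⟶ Y) [Mono m]
    (h : IsZero (cokernel m)) : IsIso m := by
  haveI : Epi m := Preadditive.epi_of_isZero_cokernel m h
  exact isIso_of_mono_of_epi m

lemma isIso_of_epi_of_isZero_kernel {X Y : C} (e : X ⟶ Y) [Epi e]
    (h : IsZero (kernel e)) : IsIso e := by
  haveI : Mono e := Preadditive.mono_of_isZero_kernel e h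
  exact isIso_of_mono_of_epi e

lemma not_isZero_kernel_of_not_isIso {X Y : C} (e : X ⟶ Y) [Epi e] (h : ¬ IsIso e) :
    ¬ IsZero (kernel e) := fun hz => h (isIso_of_epi_of_isZero_kernel e hz)

lemma not_isZero_cokernel_of_not_isIso {X Y : C} (m : X ⟶ Y) [Mono m] (h : ¬ IsIso m) :
    ¬ IsZero (cokernel m) := fun hz => h (isIso_of_mono_of_isZero_cokernel m hz)

lemma comp_cokernel_π_image_ι {A B : C} (h : A ⟶ B) :
    h ≫ cokernel.π (Abelian.image.ι h) = 0 := by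
  have h1 : (Abelian.factorThruImage h ≫ Abelian.image.ι h) ≫
      cokernel.π (Abelian.image.ι h) = 0 := by
    rw [Category.assoc, cokernel.condition, comp_zero]
  rw [Abelian.image.fac] at h1
  exact h1

lemma image_not_isZero_of_ne_zero {A B : C} {h : A ⟶ B} (hh : h ≠ 0) :
    ¬ IsZero (Abelian.image h) := by
  intro h0
  exact hh (by rw [← Abelian.image.fac h, h0.eq_of_src (Abelian.image.ι h) 0, comp_zero])

end Zero

section SES

lemma isSES_of_isLimit {K X Z : C} (k : K ⟶ X) (e : X ⟶ Z) [Epi e] [Mono k] (w : k ≫ e = 0)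
    (h : IsLimit (KernelFork.ofι k w)) : IsSES k e :=
  ⟨w, ShortComplex.ShortExact.mk'
    (ShortComplex.exact_of_f_is_kernel (ShortComplex.mk k e w) h) ‹_› ‹_›⟩

lemma isSES_kernel {X Z : C} (e : X ⟶ Z) [Epi e] : IsSES (kernel.ι e) e :=
  isSES_of_isLimit (kernel.ι e) e (kernel.condition e) (kernelIsKernel e)

lemma isSES_cokernel {U X : C} (m : U ⟶ X) [Mono m] : IsSES m (cokernel.π m) :=
  ⟨cokernel.condition m, ShortComplex.ShortExact.mk'
    (ShortComplex.exact_of_g_is_cokernel (ShortComplex.mk m (cokernel.π m) (cokernel.condition m))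
      (cokernelIsCokernel m)) (by dsimp; infer_instance) (by dsimp; infer_instance)⟩

lemma IsSES.mono_f {X₁ X₂ X₃ : C} {f : X₁ ⟶ X₂} {g : X₂ ⟶ X₃} (h : IsSES f g) : Mono f := by
  obtain ⟨w, hse⟩ := h; exact hse.mono_f

lemma IsSES.epi_g {X₁ X₂ X₃ : C} {f : X₁ ⟶ X₂} {g : X₂ ⟶ X₃} (h : IsSES f g) : Epi g := by
  obtain ⟨w, hse⟩ := h; exact hse.epi_g

lemma IsSES.desc {X₁ X₂ X₃ T : C} {f : X₁ ⟶ X₂} {g : X₂ ⟶ X₃} (h : IsSES f g)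
    (u : X₂ ⟶ T) (hu : f ≫ u = 0) : ∃ v : X₃ ⟶ T, g ≫ v = u := by
  obtain ⟨w, hse⟩ := h
  haveI := hse.epi_g; haveI := hse.mono_f
  obtain ⟨v, hv⟩ := CokernelCofork.IsColimit.desc' hse.exact.gIsCokernel u hu
  exact ⟨v, hv⟩

lemma IsSES.isIso_g {X₁ X₂ X₃ : C} {f : X₁ ⟶ X₂} {g : X₂ ⟶ X₃} (h : IsSES f g)
    (h1 : IsZero X₁) : IsIso g := by
  obtain ⟨w, hse⟩ := h
  haveI := hse.mono_f; haveI := hse.epi_g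
  obtain ⟨l, hl⟩ := KernelFork.IsLimit.lift' hse.exact.fIsKernel (kernel.ι g) (kernel.condition g)
  haveI : Mono g := Abelian.mono_of_kernel_ι_eq_zero g
    (by rw [← hl, h1.eq_of_tgt l 0, zero_comp])
  exact isIso_of_mono_of_epi g

lemma IsSES.isIso_f {X₁ X₂ X₃ : C} {f : X₁ ⟶ X₂} {g : X₂ ⟶ X₃} (h : IsSES f g)
    (h3 : IsZero X₃) : IsIso f := by
  obtain ⟨w, hse⟩ := h
  haveI := hse.mono_f; haveI := hse.epi_g
  obtain ⟨d, hd⟩ := CokernelCofork.IsColimit.desc' hse.exact.gIsCokernel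
    (cokernel.π f) (cokernel.condition f)
  haveI : Epi f := Abelian.epi_of_cokernel_π_eq_zero f
    (by rw [← hd, h3.eq_of_src d 0, comp_zero])
  exact isIso_of_mono_of_epi f

lemma mono_of_kernelSubobject_comp_le {X Z Z' : C} (e : X ⟶ Z) (q : Z ⟶ Z') [Epi e]
    (h : kernelSubobject (e ≫ q) ≤ kernelSubobject e) : Mono q := by
  have w : pullback.fst e (kernel.ι q) ≫ e ≫ q = 0 := by
    rw [← Category.assoc, pullback.condition, Category.assoc, kernel.condition, comp_zero]
  have hfst : pullback.fst e (kernel.ι q) ≫ e = 0 := by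
    have hfac := factorThruKernelSubobject_comp_arrow (e ≫ q) (pullback.fst e (kernel.ι q)) w
    rw [← hfac, Category.assoc, ← Subobject.ofLE_arrow h, Category.assoc,
      kernelSubobject_arrow_comp, comp_zero, comp_zero]
  have hsnd : pullback.snd e (kernel.ι q) ≫ kernel.ι q = 0 := by
    rw [← pullback.condition, hfst]
  have hsnd0 : pullback.snd e (kernel.ι q) = 0 := by
    rwa [← cancel_mono (kernel.ι q), zero_comp]
  haveI : Epi (pullback.snd e (kernel.ι q)) := Abelian.epi_pullback_of_epi_f _ _
  exact Preadditive.mono_of_isZero_kernel q (isZero_of_epi_eq_zero _ hsnd0)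

/-- Pulling back a mono `m` along an epi `e` yields a short exact sequence
`ker e ⟶ P ⟶ W`. -/
lemma pullback_kernel_isSES {A B W : C} (e : A ⟶ B) (m : W ⟶ B) [Epi e] [Mono m] :
    ∃ k : kernel e ⟶ pullback e m,
      (k ≫ pullback.fst e m = kernel.ι e) ∧ IsSES k (pullback.snd e m) := by
  have w0 : kernel.ι e ≫ e = (0 : kernel e ⟶ W) ≫ m := by simp
  refine ⟨pullback.lift (kernel.ι e) 0 w0, pullback.lift_fst _ _ _, ?_⟩
  have hk0 : pullback.lift (kernel.ι e) 0 w0 ≫ pullback.snd e m = 0 := pullback.lift_snd _ _ _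
  haveI : Mono (pullback.lift (kernel.ι e) 0 w0) := by
    refine mono_of_mono_fac (pullback.lift_fst (kernel.ι e) 0 w0)
  haveI : Epi (pullback.snd e m) := Abelian.epi_pullback_of_epi_f _ _
  refine isSES_of_isLimit _ _ hk0 ?_
  refine KernelFork.IsLimit.ofι' _ _ (fun {T} t ht => ?_)
  have htf : (t ≫ pullback.fst e m) ≫ e = 0 := by
    rw [Category.assoc, pullback.condition, ← Category.assoc, ht, zero_comp]
  refine ⟨kernel.lift e (t ≫ pullback.fst e m) htf, ?_⟩
  apply pullback.hom_ext
  · rw [Category.assoc, pullback.lift_fst, kernel.lift_ι]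
  · rw [Category.assoc, pullback.lift_snd, comp_zero, ht]

end SES

end Aux

section Stability

variable {C : Type u} [Category.{v} C] [Abelian C]
variable {P : Type*} [LinearOrder P]

/-- The torsion class attached to an upward-closed set of phases. -/
def Tge (φ : C → P) (Λ : Set P) : Set C :=
  {X : C | ExtClosure {Y : C | Semistable φ Y ∧ φ Y ∈ Λ} X}

lemma TgeSet_eq_Tge (φ : C → P) (t : P) : TgeSet φ t = Tge φ (Set.Ici t) := rfl

lemma ExtClosure_mono {S₁ S₂ : Set C} (h : S₁ ⊆ S₂) :
    ∀ {X : C}, ExtClosure S₁ X → ExtClosure S₂ X := by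
  intro X hX
  induction hX with
  | of X h' => exact .of X (h h')
  | zero X h' => exact .zero X h'
  | iso X Y e _ ih => exact .iso X Y e ih
  | ext X₁ X₂ X₃ f g hseq _ _ ih₁ ih₃ => exact .ext X₁ X₂ X₃ f g hseq ih₁ ih₃

lemma Tge_mono (φ : C → P) {Λ₁ Λ₂ : Set P} (h : Λ₁ ⊆ Λ₂) : Tge φ Λ₁ ⊆ Tge φ Λ₂ :=
  fun _ hX => ExtClosure_mono (S₂ := {Y | Semistable φ Y ∧ φ Y ∈ Λ₂})
    (fun Y hY => ⟨hY.1, h hY.2⟩) hX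

lemma exists_gen_sub {S : Set C} {X : C} (hX : ExtClosure S X) :
    ¬ IsZero X → ∃ (U : C) (m : U ⟶ X), Mono m ∧ ¬ IsZero U ∧ U ∈ S := by
  induction hX with
  | of X h => exact fun hnz => ⟨X, 𝟙 X, inferInstance, hnz, h⟩
  | zero X h => exact fun hnz => absurd h hnz
  | iso X Y e hX ih =>
    intro hnz
    obtain ⟨U, m, hm, hU, hUS⟩ := ih (fun h => hnz (h.of_iso e.symm))
    exact ⟨U, m ≫ e.hom, mono_comp _ _, hU, hUS⟩
  | ext X₁ X₂ X₃ f g hseq h₁ h₃ ih₁ ih₃ =>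
    intro hnz
    by_cases h10 : IsZero X₁
    · haveI := hseq.isIso_g h10
      obtain ⟨U, m, hm, hU, hUS⟩ := ih₃ (fun h3 => hnz (h3.of_iso (asIso g)))
      exact ⟨U, m ≫ inv g, mono_comp _ _, hU, hUS⟩
    · obtain ⟨U, m, hm, hU, hUS⟩ := ih₁ h10
      haveI := hseq.mono_f
      exact ⟨U, m ≫ f, mono_comp _ _, hU, hUS⟩

lemma exists_gen_notmem {S : Set C} {T' : Set C} (hz : ∀ X : C, IsZero X → X ∈ T')
    (hi : IsoClosed T') (he : ExtClosedSet T') {X : C} (hX : ExtClosure S X) :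
    X ∉ T' → ∃ Y ∈ S, Y ∉ T' := by
  induction hX with
  | of Y h => exact fun hn => ⟨Y, h, hn⟩
  | zero Y h => exact fun hn => absurd (hz Y h) hn
  | iso X Y e hX ih => exact fun hn => ih (fun hXm => hn (hi e hXm))
  | ext X₁ X₂ X₃ f g hseq h1 h3 ih1 ih3 =>
    intro hn
    by_cases hm1 : X₁ ∈ T'
    · by_cases hm3 : X₃ ∈ T'
      · exact absurd (he f g hseq hm1 hm3) hn
      · exact ih3 hm3
    · exact ih1 hm1

variable (φ : C → P) (hφ : IsStabilityFunction φ)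

lemma exists_destab {M : C} (hnz : ¬ IsZero M) (h : ¬ Semistable φ M) :
    ∃ (L : C) (f : L ⟶ M), Mono f ∧ ¬ IsZero L ∧ φ M < φ L := by
  have h' : ¬ (∀ (L : C) (f : L ⟶ M), Mono f → ¬ IsZero L → φ L ≤ φ M) := by
    intro hall
    exact h ⟨hnz, fun L f hf hL => hall L f hf hL⟩
  push_neg at h'
  obtain ⟨L, f, hf, hL, hgt⟩ := h'
  exact ⟨L, f, hf, hL, hgt⟩

include hφ

lemma StableObj.semistable {N : C} (h : StableObj φ N) : Semistable φ N := by
  refine ⟨h.1, fun L f hf hL => ?_⟩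
  by_cases hi : IsIso f
  · exact le_of_eq (hφ.iso_invariant (asIso f))
  · exact le_of_lt (h.2 f hf hL hi)

lemma phase_le_of_epi_of_ss {X Z : C} (e : X ⟶ Z) [Epi e] (hss : Semistable φ X)
    (hZ : ¬ IsZero Z) : φ X ≤ φ Z := by
  by_cases hk : IsZero (kernel e)
  · haveI := isIso_of_epi_of_isZero_kernel e hk
    exact le_of_eq (hφ.iso_invariant (asIso e))
  · rcases hφ.seesaw _ _ (isSES_kernel e) hk hss.1 hZ with ⟨h1, h2⟩ | ⟨h1, h2⟩ | ⟨h1, h2⟩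
    · exact le_of_eq h2
    · exact le_of_lt h2
    · exact absurd (hss.2 (kernel.ι e) inferInstance hk) (not_le.mpr h2)

lemma phase_lt_of_epi_of_stable {X Z : C} (e : X ⟶ Z) [Epi e] (hst : StableObj φ X)
    (hk : ¬ IsZero (kernel e)) (hZ : ¬ IsZero Z) : φ X < φ Z := by
  have hki : ¬ IsIso (kernel.ι e) := by
    intro h
    have he0 : e = 0 := by
      haveI : Epi (kernel.ι e) := by infer_instance
      rw [← cancel_epi (kernel.ι e), kernel.condition, comp_zero]
    exact hZ (isZero_of_epi_eq_zero e he0)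
  have hlt : φ (kernel e) < φ X := hst.2 (kernel.ι e) inferInstance hk hki
  rcases hφ.seesaw _ _ (isSES_kernel e) hk hst.1 hZ with ⟨h1, h2⟩ | ⟨h1, h2⟩ | ⟨h1, h2⟩
  · exact absurd h1 (ne_of_lt hlt)
  · exact h2
  · exact absurd h2 (not_lt.mpr (le_of_lt hlt))

lemma exists_le_phase {Λ : Set P} {X : C} (hX : X ∈ Tge φ Λ) :
    ¬ IsZero X → ∃ b ∈ Λ, b ≤ φ X := by
  induction hX with
  | of X h => exact fun _ => ⟨φ X, h.2, le_rfl⟩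
  | zero X h => exact fun hnz => absurd h hnz
  | iso X Y e hX ih =>
    intro hnz
    obtain ⟨b, hb, hb'⟩ := ih (fun h => hnz (h.of_iso e.symm))
    exact ⟨b, hb, by rw [← hφ.iso_invariant e]; exact hb'⟩
  | ext X₁ X₂ X₃ f g hseq h₁ h₃ ih₁ ih₃ =>
    intro hnz
    by_cases h10 : IsZero X₁
    · haveI := hseq.isIso_g h10
      obtain ⟨b, hb, hb'⟩ := ih₃ (fun h3 => hnz (h3.of_iso (asIso g)))
      exact ⟨b, hb, by rw [hφ.iso_invariant (asIso g)]; exact hb'⟩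
    · by_cases h30 : IsZero X₃
      · haveI := hseq.isIso_f h30
        obtain ⟨b, hb, hb'⟩ := ih₁ h10
        exact ⟨b, hb, by rw [← hφ.iso_invariant (asIso f)]; exact hb'⟩
      · rcases hφ.seesaw f g hseq h10 hnz h30 with ⟨h1, h2⟩ | ⟨h1, h2⟩ | ⟨h1, h2⟩
        · obtain ⟨b, hb, hb'⟩ := ih₁ h10
          exact ⟨b, hb, by rw [← h1]; exact hb'⟩
        · obtain ⟨b, hb, hb'⟩ := ih₁ h10
          exact ⟨b, hb, le_of_lt (lt_of_le_of_lt hb' h1)⟩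
        · obtain ⟨b, hb, hb'⟩ := ih₃ h30
          exact ⟨b, hb, le_of_lt (lt_of_le_of_lt hb' h1)⟩

/-- Every nonzero object has a semistable subobject of phase at least its own. -/
lemma exists_ss_sub [∀ X : C, IsArtinianObject X] :
    ∀ (X : C), ¬ IsZero X → ∃ (U : C) (m : U ⟶ X), Mono m ∧ Semistable φ U ∧ φ X ≤ φ U := by
  intro X
  suffices h : ∀ V : Subobject X, ¬ IsZero (V : C) →
      ∃ (U : C) (m : U ⟶ (V : C)), Mono m ∧ Semistable φ U ∧ φ (V : C) ≤ φ U by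
    intro hnz
    have htopnz : ¬ IsZero ((⊤ : Subobject X) : C) := fun h0 =>
      hnz (h0.of_iso (asIso (⊤ : Subobject X).arrow).symm)
    obtain ⟨U, m, hm, hss, hle⟩ := h ⊤ htopnz
    refine ⟨U, m ≫ (⊤ : Subobject X).arrow, mono_comp _ _, hss, ?_⟩
    rw [hφ.iso_invariant (asIso (⊤ : Subobject X).arrow)] at hle
    exact hle
  intro V
  induction V using WellFounded.induction (wellFounded_lt (α := Subobject X)) with
  | _ V ih =>
  intro hnz
  by_cases hss : Semistable φ (V : C)
  · exact ⟨(V : C), 𝟙 _, inferInstance, hss, le_rfl⟩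
  · obtain ⟨L, f, hf, hL, hgt⟩ := exists_destab φ hnz hss
    haveI := hf
    haveI : Mono (f ≫ V.arrow) := mono_comp _ _
    set V' : Subobject X := Subobject.mk (f ≫ V.arrow) with hV'
    have hlt : V' < V := by
      refine lt_of_le_of_ne (Subobject.mk_le_of_comm f rfl) ?_
      intro heq
      have hVle : V ≤ V' := le_of_eq heq.symm
      have harr := Subobject.ofLE_arrow hVle
      have key : (Subobject.ofLE V V' hVle ≫ (Subobject.underlyingIso (f ≫ V.arrow)).hom ≫ f)
          ≫ V.arrow = V.arrow := by
        calc (Subobject.ofLE V V' hVle ≫ (Subobject.underlyingIso (f ≫ V.arrow)).hom ≫ f)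
              ≫ V.arrow
            = Subobject.ofLE V V' hVle ≫
              ((Subobject.underlyingIso (f ≫ V.arrow)).hom ≫ (f ≫ V.arrow)) := by
              simp only [Category.assoc]
          _ = Subobject.ofLE V V' hVle ≫ V'.arrow := by
              rw [Subobject.underlyingIso_hom_comp_eq_mk]
          _ = V.arrow := harr
      have hsplit' : (Subobject.ofLE V V' hVle ≫ (Subobject.underlyingIso (f ≫ V.arrow)).hom)
          ≫ f = 𝟙 _ := by
        rw [← cancel_mono V.arrow, Category.id_comp]
        simp only [Category.assoc]
        simpa only [Category.assoc] using key
      haveI : IsSplitEpi f := ⟨⟨⟨_, hsplit'⟩⟩⟩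
      haveI : IsIso f := isIso_of_mono_of_epi f
      exact absurd (hφ.iso_invariant (asIso f)) (ne_of_gt hgt)
    have hV'nz : ¬ IsZero ((V' : C) : C) := fun h0 =>
      hL (h0.of_iso (Subobject.underlyingIso (f ≫ V.arrow)).symm)
    obtain ⟨U, m, hm, hssU, hleU⟩ := ih V' hlt hV'nz
    refine ⟨U, m ≫ (Subobject.underlyingIso (f ≫ V.arrow)).hom ≫ f, mono_comp _ _, hssU, ?_⟩
    have : φ ((V' : C) : C) = φ L := hφ.iso_invariant (Subobject.underlyingIso (f ≫ V.arrow))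
    exact le_of_lt (lt_of_lt_of_le hgt (by rw [← this]; exact hleU))

end Stability

section Aux2

variable {C : Type u} [Category.{v} C] [Abelian C]

lemma isIso_of_mk_eq {X : C} {V : Subobject X} {L : C} (f : L ⟶ (V : C)) [Mono f]
    (heq : Subobject.mk (f ≫ V.arrow) = V) : IsIso f := by
  haveI : Mono (f ≫ V.arrow) := mono_comp _ _
  have hVle : V ≤ Subobject.mk (f ≫ V.arrow) := le_of_eq heq.symm
  have harr := Subobject.ofLE_arrow hVle
  have key : (Subobject.ofLE V _ hVle ≫ (Subobject.underlyingIso (f ≫ V.arrow)).hom ≫ f)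
      ≫ V.arrow = V.arrow := by
    calc (Subobject.ofLE V _ hVle ≫ (Subobject.underlyingIso (f ≫ V.arrow)).hom ≫ f)
          ≫ V.arrow
        = Subobject.ofLE V _ hVle ≫
          ((Subobject.underlyingIso (f ≫ V.arrow)).hom ≫ (f ≫ V.arrow)) := by
          simp only [Category.assoc]
      _ = Subobject.ofLE V _ hVle ≫ (Subobject.mk (f ≫ V.arrow)).arrow := by
          rw [Subobject.underlyingIso_hom_comp_eq_mk]
      _ = V.arrow := harr
  have hsplit' : (Subobject.ofLE V _ hVle ≫ (Subobject.underlyingIso (f ≫ V.arrow)).hom)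
      ≫ f = 𝟙 _ := by
    rw [← cancel_mono V.arrow, Category.id_comp]
    simp only [Category.assoc]
    simpa only [Category.assoc] using key
  haveI : IsSplitEpi f := ⟨⟨⟨_, hsplit'⟩⟩⟩
  exact isIso_of_mono_of_epi f

lemma homZero_isTorsionClass {T : Set C} (hT : IsTorsionClass T) (F : C) :
    IsTorsionClass {W : C | W ∈ T ∧ ∀ h : W ⟶ F, h = 0} := by
  constructor
  · exact fun X hX => ⟨hT.zero_mem X hX, fun h => hX.eq_of_src h 0⟩
  · intro X Y e hX
    refine ⟨hT.iso_closed e hX.1, fun h => ?_⟩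
    have h0 : e.hom ≫ h = e.hom ≫ 0 := by rw [comp_zero]; exact hX.2 (e.hom ≫ h)
    exact (cancel_epi e.hom).mp h0
  · intro X₁ X₂ X₃ f g hseq h1 h3
    refine ⟨hT.ext_closed f g hseq h1.1 h3.1, fun h => ?_⟩
    obtain ⟨v, hv⟩ := hseq.desc h (h1.2 (f ≫ h))
    rw [← hv, h3.2 v, comp_zero]
  · intro X Y pr hp hX
    haveI := hp
    refine ⟨hT.quot_closed pr hp hX.1, fun h => ?_⟩
    have h0 : pr ≫ h = pr ≫ 0 := by rw [comp_zero]; exact hX.2 (pr ≫ h)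
    exact (cancel_epi pr).mp h0

lemma exists_torsion_part [∀ X : C, IsNoetherianObject X] {T : Set C} (hT : IsTorsionClass T)
    (X : C) : ∃ V : Subobject X, ((V : C) ∈ T) ∧
      ∀ (W : C) (m : W ⟶ cokernel V.arrow), Mono m → W ∈ T → IsZero W := by
  have hbot : (⊥ : Subobject X) ∈ {V : Subobject X | (V : C) ∈ T} :=
    hT.zero_mem _ (IsZero.of_iso (isZero_zero C) Subobject.botCoeIsoZero)
  obtain ⟨V, hVmem, hVmax⟩ := (wellFounded_gt (α := Subobject X)).has_min _ ⟨⊥, hbot⟩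
  refine ⟨V, hVmem, ?_⟩
  intro W m hm hW
  haveI := hm
  obtain ⟨k, hk1, hses⟩ := pullback_kernel_isSES (cokernel.π V.arrow) m
  haveI : IsIso (Abelian.factorThruImage V.arrow) := inferInstance
  have hPmem : pullback (cokernel.π V.arrow) m ∈ T := by
    refine hT.ext_closed k (pullback.snd _ _) hses ?_ hW
    exact hT.iso_closed (asIso (Abelian.factorThruImage V.arrow)) hVmem
  have hle : V ≤ Subobject.mk (pullback.fst (cokernel.π V.arrow) m) := by
    refine Subobject.le_mk_of_comm (Abelian.factorThruImage V.arrow ≫ k) ?_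
    rw [Category.assoc, hk1]
    exact Abelian.image.fac V.arrow
  have hmkmem : Subobject.mk (pullback.fst (cokernel.π V.arrow) m) ∈
      {V : Subobject X | (V : C) ∈ T} :=
    hT.iso_closed (Subobject.underlyingIso (pullback.fst (cokernel.π V.arrow) m)).symm hPmem
  have heq : Subobject.mk (pullback.fst (cokernel.π V.arrow) m) = V := by
    by_contra hne
    exact hVmax _ hmkmem (lt_of_le_of_ne hle (Ne.symm hne))
  obtain ⟨t, ht⟩ : ∃ t : pullback (cokernel.π V.arrow) m ⟶ (V : C),
      t ≫ V.arrow = pullback.fst (cokernel.π V.arrow) m := by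
    refine ⟨(Subobject.underlyingIso _).inv ≫ Subobject.ofLE _ _ (le_of_eq heq), ?_⟩
    rw [Category.assoc, Subobject.ofLE_arrow, Subobject.underlyingIso_arrow]
  have hsnd : pullback.snd (cokernel.π V.arrow) m ≫ m = 0 := by
    rw [← pullback.condition, ← ht, Category.assoc, cokernel.condition, comp_zero]
  have hsnd0 : pullback.snd (cokernel.π V.arrow) m = 0 := by
    rwa [← cancel_mono m, zero_comp]
  haveI := hses.epi_g
  exact isZero_of_epi_eq_zero _ hsnd0

end Aux2

section Stability2

variable {C : Type u} [Category.{v} C] [Abelian C]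
variable {P : Type*} [LinearOrder P]
variable (φ : C → P) (hφ : IsStabilityFunction φ)

include hφ

lemma mem_of_epi_of_ss [∀ X : C, IsNoetherianObject X] [∀ X : C, IsArtinianObject X]
    {X : C} (hss : Semistable φ X) {Z : C} (e : X ⟶ Z) (he : Epi e) (hz : ¬ IsZero Z) :
    Z ∈ TgeSet φ (φ X) := by
  suffices h : ∀ K : Subobject X, ∀ (Z : C) (e : X ⟶ Z), Epi e → kernelSubobject e = K →
      ¬ IsZero Z → Z ∈ TgeSet φ (φ X) from h _ Z e he rfl hz
  intro K
  induction K using WellFounded.induction (wellFounded_gt (α := Subobject X)) with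
  | _ K ih =>
  intro Z e he hK hz
  haveI := he
  by_cases hZss : Semistable φ Z
  · exact .of Z ⟨hZss, phase_le_of_epi_of_ss φ hφ e hss hz⟩
  · obtain ⟨L, w, hw, hL, hφL⟩ := exists_destab φ hz hZss
    obtain ⟨U, m, hm, hUss, hUφ⟩ := exists_ss_sub φ hφ L hL
    haveI := hw; haveI := hm
    haveI : Mono (m ≫ w) := mono_comp _ _
    have hφU : φ Z < φ U := lt_of_lt_of_le hφL hUφ
    have hZ' : ¬ IsZero (cokernel (m ≫ w)) := by
      intro h0
      haveI := isIso_of_mono_of_isZero_cokernel (m ≫ w) h0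
      exact (ne_of_gt hφU) (hφ.iso_invariant (asIso (m ≫ w)))
    haveI : Epi (e ≫ cokernel.π (m ≫ w)) := epi_comp _ _
    have w0 : (kernelSubobject e).arrow ≫ e ≫ cokernel.π (m ≫ w) = 0 := by
      rw [← Category.assoc, kernelSubobject_arrow_comp, zero_comp]
    have hle : K ≤ kernelSubobject (e ≫ cokernel.π (m ≫ w)) := by
      rw [← hK]
      exact Subobject.le_of_comm (factorThruKernelSubobject _ _ w0)
        (factorThruKernelSubobject_comp_arrow _ _ w0)
    have hne : K ≠ kernelSubobject (e ≫ cokernel.π (m ≫ w)) := by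
      intro heq
      haveI : Mono (cokernel.π (m ≫ w)) :=
        mono_of_kernelSubobject_comp_le e _ (by rw [← heq, hK])
      haveI : IsIso (cokernel.π (m ≫ w)) := isIso_of_mono_of_epi _
      have h0 : (m ≫ w) = 0 := by
        rw [← cancel_mono (cokernel.π (m ≫ w)), cokernel.condition, zero_comp]
      exact hUss.1 (isZero_of_mono_eq_zero _ h0)
    have hmem' := ih _ (lt_of_le_of_ne hle hne) _ (e ≫ cokernel.π (m ≫ w))
      inferInstance rfl hZ'
    exact .ext U Z _ (m ≫ w) (cokernel.π (m ≫ w)) (isSES_cokernel _)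
      (.of U ⟨hUss, le_of_lt (lt_of_le_of_lt (phase_le_of_epi_of_ss φ hφ e hss hz) hφU)⟩) hmem'

lemma mem_of_epi_of_stable [∀ X : C, IsNoetherianObject X] [∀ X : C, IsArtinianObject X]
    {X : C} (hst : StableObj φ X) {Z : C} (e : X ⟶ Z) (he : Epi e) (hie : ¬ IsIso e)
    (hz : ¬ IsZero Z) : Z ∈ Tge φ (Set.Ioi (φ X)) := by
  suffices h : ∀ K : Subobject X, ∀ (Z : C) (e : X ⟶ Z), Epi e → kernelSubobject e = K →
      ¬ IsZero ((kernelSubobject e : Subobject X) : C) → ¬ IsZero Z →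
      Z ∈ Tge φ (Set.Ioi (φ X)) by
    haveI := he
    refine h _ Z e he rfl ?_ hz
    have hknz : ¬ IsZero (kernel e) := not_isZero_kernel_of_not_isIso e hie
    exact fun h0 => hknz (IsZero.of_iso h0 (kernelSubobjectIso e).symm)
  intro K
  induction K using WellFounded.induction (wellFounded_gt (α := Subobject X)) with
  | _ K ih =>
  intro Z e he hK hknz hz
  haveI := he
  have hknz' : ¬ IsZero (kernel e) := fun h0 => hknz (IsZero.of_iso h0 (kernelSubobjectIso e))
  have hφZ : φ X < φ Z := phase_lt_of_epi_of_stable φ hφ e hst hknz' hz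
  by_cases hZss : Semistable φ Z
  · exact .of Z ⟨hZss, hφZ⟩
  · obtain ⟨L, w, hw, hL, hφL⟩ := exists_destab φ hz hZss
    obtain ⟨U, m, hm, hUss, hUφ⟩ := exists_ss_sub φ hφ L hL
    haveI := hw; haveI := hm
    haveI : Mono (m ≫ w) := mono_comp _ _
    have hφU : φ Z < φ U := lt_of_lt_of_le hφL hUφ
    have hZ' : ¬ IsZero (cokernel (m ≫ w)) := by
      intro h0
      haveI := isIso_of_mono_of_isZero_cokernel (m ≫ w) h0
      exact (ne_of_gt hφU) (hφ.iso_invariant (asIso (m ≫ w)))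
    haveI : Epi (e ≫ cokernel.π (m ≫ w)) := epi_comp _ _
    have w0 : (kernelSubobject e).arrow ≫ e ≫ cokernel.π (m ≫ w) = 0 := by
      rw [← Category.assoc, kernelSubobject_arrow_comp, zero_comp]
    have hle : K ≤ kernelSubobject (e ≫ cokernel.π (m ≫ w)) := by
      rw [← hK]
      exact Subobject.le_of_comm (factorThruKernelSubobject _ _ w0)
        (factorThruKernelSubobject_comp_arrow _ _ w0)
    have hne : K ≠ kernelSubobject (e ≫ cokernel.π (m ≫ w)) := by
      intro heq
      haveI : Mono (cokernel.π (m ≫ w)) :=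
        mono_of_kernelSubobject_comp_le e _ (by rw [← heq, hK])
      haveI : IsIso (cokernel.π (m ≫ w)) := isIso_of_mono_of_epi _
      have h0 : (m ≫ w) = 0 := by
        rw [← cancel_mono (cokernel.π (m ≫ w)), cokernel.condition, zero_comp]
      exact hUss.1 (isZero_of_mono_eq_zero _ h0)
    have hle' : kernelSubobject e ≤ kernelSubobject (e ≫ cokernel.π (m ≫ w)) := by
      rw [hK]; exact hle
    have hknz2 : ¬ IsZero ((kernelSubobject (e ≫ cokernel.π (m ≫ w)) : Subobject X) : C) := by
      intro h0
      haveI : Mono (Subobject.ofLE _ _ hle') := mono_of_mono_fac (Subobject.ofLE_arrow hle')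
      exact hknz (isZero_source_of_mono (Subobject.ofLE _ _ hle') h0)
    have hmem' := ih _ (lt_of_le_of_ne hle hne) _ (e ≫ cokernel.π (m ≫ w))
      inferInstance rfl hknz2 hZ'
    exact .ext U Z _ (m ≫ w) (cokernel.π (m ≫ w)) (isSES_cokernel _)
      (.of U ⟨hUss, lt_trans hφZ hφU⟩) hmem'

lemma tge_quot [∀ X : C, IsNoetherianObject X] [∀ X : C, IsArtinianObject X]
    {Λ : Set P} (hΛ : ∀ ⦃a b : P⦄, a ∈ Λ → a ≤ b → b ∈ Λ) :
    ∀ {X : C}, X ∈ Tge φ Λ → ∀ {Z : C} (e : X ⟶ Z), Epi e → Z ∈ Tge φ Λ := by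
  intro X hX
  induction hX with
  | of Y hY =>
    intro Z e he
    by_cases hz : IsZero Z
    · exact .zero Z hz
    · exact ExtClosure_mono (S₂ := {W | Semistable φ W ∧ φ W ∈ Λ})
        (fun W hW => ⟨hW.1, hΛ hY.2 hW.2⟩) (mem_of_epi_of_ss φ hφ hY.1 e he hz)
  | zero Y hY =>
    intro Z e he
    haveI := he
    exact .zero Z (isZero_target_of_epi e hY)
  | iso X Y e' hX ih =>
    intro Z q hq
    haveI := hq
    exact ih (e'.hom ≫ q) (epi_comp _ _)
  | ext X₁ X₂ X₃ f g hseq h₁ h₃ ih₁ ih₃ =>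
    intro Z e he
    haveI := he
    haveI := hseq.mono_f; haveI := hseq.epi_g
    by_cases hh : f ≫ e = 0
    · obtain ⟨v, hv⟩ := hseq.desc e hh
      haveI : Epi (g ≫ v) := by rw [hv]; exact he
      exact ih₃ v (epi_of_epi g v)
    · have hI : Abelian.image (f ≫ e) ∈ Tge φ Λ :=
        ih₁ (Abelian.factorThruImage (f ≫ e)) inferInstance
      have hfc : f ≫ (e ≫ cokernel.π (Abelian.image.ι (f ≫ e))) = 0 := by
        rw [← Category.assoc]
        exact comp_cokernel_π_image_ι (f ≫ e)
      obtain ⟨v, hv⟩ := hseq.desc (e ≫ cokernel.π (Abelian.image.ι (f ≫ e))) hfc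
      haveI : Epi (e ≫ cokernel.π (Abelian.image.ι (f ≫ e))) := epi_comp _ _
      haveI : Epi (g ≫ v) := by rw [hv]; infer_instance
      have hC : cokernel (Abelian.image.ι (f ≫ e)) ∈ Tge φ Λ := ih₃ v (epi_of_epi g v)
      exact .ext _ Z _ (Abelian.image.ι (f ≫ e)) (cokernel.π _) (isSES_cokernel _) hI hC

lemma tge_isTorsionClass [∀ X : C, IsNoetherianObject X] [∀ X : C, IsArtinianObject X]
    {Λ : Set P} (hΛ : ∀ ⦃a b : P⦄, a ∈ Λ → a ≤ b → b ∈ Λ) : IsTorsionClass (Tge φ Λ) := by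
  constructor
  · exact fun X h => .zero X h
  · exact fun X Y e h => .iso X Y e h
  · exact fun X₁ X₂ X₃ f g hseq h1 h3 => .ext X₁ X₂ X₃ f g hseq h1 h3
  · exact fun X Y pr hp hX => tge_quot φ hφ hΛ hX pr hp

lemma exists_stable_sub [∀ X : C, IsArtinianObject X] {Y : C} (hss : Semistable φ Y) :
    ∃ (N : C) (n : N ⟶ Y), Mono n ∧ StableObj φ N ∧ φ N = φ Y := by
  have htop : (⊤ : Subobject Y) ∈ {L : Subobject Y | ¬ IsZero (L : C) ∧ φ (L : C) = φ Y} := by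
    constructor
    · exact fun h0 => hss.1 (h0.of_iso (asIso (⊤ : Subobject Y).arrow).symm)
    · exact hφ.iso_invariant (asIso (⊤ : Subobject Y).arrow)
  obtain ⟨L, hL, hmin⟩ := (wellFounded_lt (α := Subobject Y)).has_min _ ⟨⊤, htop⟩
  refine ⟨(L : C), L.arrow, inferInstance, ⟨hL.1, ?_⟩, hL.2⟩
  intro K k hk hK hki
  haveI := hk
  haveI : Mono (k ≫ L.arrow) := mono_comp _ _
  have hKle : φ K ≤ φ Y := hss.2 (k ≫ L.arrow) inferInstance hK
  rcases eq_or_lt_of_le hKle with heq | hlt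
  · exfalso
    have hmem : Subobject.mk (k ≫ L.arrow) ∈
        {L : Subobject Y | ¬ IsZero (L : C) ∧ φ (L : C) = φ Y} := by
      constructor
      · exact fun h0 => hK (h0.of_iso (Subobject.underlyingIso (k ≫ L.arrow)).symm)
      · rw [hφ.iso_invariant (Subobject.underlyingIso (k ≫ L.arrow))]; exact heq
    refine hmin _ hmem (lt_of_le_of_ne (Subobject.mk_le_of_comm k rfl) ?_)
    intro heq2
    exact hki (isIso_of_mk_eq k heq2)
  · rw [← hL.2] at hlt; exact hlt

end Stability2

/-- if the torsion classes `T_{≥p} ⋖ T_{≥q}` of a stability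
function form a cover, then there is a unique (up to isomorphism) stable object
`N` with `T_{≥φ(N)} = T_{≥q}`; it is a minimal extending object for `T_{≥p}` and
satisfies `q ≤ φ(N) < p`. -/
theorem stable_object_of_cover
    {C : Type u} [Category.{v} C] [Abelian C]
    [∀ X : C, IsNoetherianObject X] [∀ X : C, IsArtinianObject X]
    {P : Type*} [LinearOrder P]
    (φ : C → P) (hφ : IsStabilityFunction φ) (p q : P)
    (hcov : CoversTC (TgeSet φ p) (TgeSet φ q)) :
    ∃ N : C, StableObj φ N ∧ TgeSet φ (φ N) = TgeSet φ q ∧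
      (∀ N' : C, StableObj φ N' → TgeSet φ (φ N') = TgeSet φ q → Nonempty (N ≅ N')) ∧
      IsMinimalExtending (TgeSet φ p) N ∧ q ≤ φ N ∧ φ N < p := by
  classical
  obtain ⟨hsub, hne, hcovmax⟩ := hcov
  have hTCp : IsTorsionClass (TgeSet φ p) := by
    rw [TgeSet_eq_Tge]
    exact tge_isTorsionClass φ hφ (fun a b ha hab => le_trans ha hab)
  have hTCq : IsTorsionClass (TgeSet φ q) := by
    rw [TgeSet_eq_Tge]
    exact tge_isTorsionClass φ hφ (fun a b ha hab => le_trans ha hab)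
  have hqp : q < p := by
    by_contra hle
    push_neg at hle
    have hsub2 : TgeSet φ q ⊆ TgeSet φ p := fun X hX =>
      ExtClosure_mono (S₂ := {Y | Semistable φ Y ∧ p ≤ φ Y})
        (fun Y hY => ⟨hY.1, le_trans hle hY.2⟩) hX
    exact hne (Set.Subset.antisymm hsub hsub2)
  obtain ⟨X₀, hX₀q, hX₀p⟩ := Set.exists_of_ssubset (HasSubset.Subset.ssubset_of_ne hsub hne)
  obtain ⟨Y, hYgen, hYp⟩ := exists_gen_notmem (fun X h => ExtClosure.zero X h)
      (fun X Y e h => ExtClosure.iso X Y e h)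
      (fun X₁ X₂ X₃ f g hseq h1 h3 => ExtClosure.ext X₁ X₂ X₃ f g hseq h1 h3) hX₀q hX₀p
  obtain ⟨hYss, hqY⟩ := hYgen
  have hYplt : φ Y < p := by
    by_contra h
    push_neg at h
    exact hYp (.of Y ⟨hYss, h⟩)
  obtain ⟨N, n, hn, hNst, hNφ⟩ := exists_stable_sub φ hφ hYss
  have hNss : Semistable φ N := StableObj.semistable φ hφ hNst
  have hq_s : q ≤ φ N := by rw [hNφ]; exact hqY
  have hs_p : φ N < p := by rw [hNφ]; exact hYplt
  have hNmem_s : N ∈ TgeSet φ (φ N) := .of N ⟨hNss, le_rfl⟩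
  have hNnotp : N ∉ TgeSet φ p := by
    intro hmem
    obtain ⟨U, m, hm, hU, hUS⟩ := exists_gen_sub hmem hNst.1
    exact absurd (hNss.2 m hm hU) (not_le.mpr (lt_of_lt_of_le hs_p hUS.2))
  have hTsq : TgeSet φ (φ N) = TgeSet φ q := by
    have hTCs : IsTorsionClass (TgeSet φ (φ N)) := by
      rw [TgeSet_eq_Tge]
      exact tge_isTorsionClass φ hφ (fun a b ha hab => le_trans ha hab)
    have h1 : TgeSet φ p ⊆ TgeSet φ (φ N) := fun X hX =>
      ExtClosure_mono (S₂ := {W | Semistable φ W ∧ φ N ≤ φ W})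
        (fun W hW => ⟨hW.1, le_trans (le_of_lt hs_p) hW.2⟩) hX
    have h2 : TgeSet φ (φ N) ⊆ TgeSet φ q := fun X hX =>
      ExtClosure_mono (S₂ := {W | Semistable φ W ∧ q ≤ φ W})
        (fun W hW => ⟨hW.1, le_trans hq_s hW.2⟩) hX
    rcases hcovmax _ hTCs h1 h2 with h | h
    · exact absurd (h ▸ hNmem_s) hNnotp
    · exact h
  have hNmem_q : N ∈ TgeSet φ q := hTsq ▸ hNmem_s
  have hNnot_gt : N ∉ Tge φ (Set.Ioi (φ N)) := by
    intro hmem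
    obtain ⟨U, m, hm, hU, hUS⟩ := exists_gen_sub hmem hNst.1
    exact absurd (hNss.2 m hm hU) (not_le.mpr hUS.2)
  have hTgt : Tge φ (Set.Ioi (φ N)) = TgeSet φ p := by
    have h1 : TgeSet φ p ⊆ Tge φ (Set.Ioi (φ N)) := fun X hX =>
      ExtClosure_mono (S₂ := {W | Semistable φ W ∧ φ W ∈ Set.Ioi (φ N)})
        (fun W hW => ⟨hW.1, lt_of_lt_of_le hs_p hW.2⟩) hX
    have h2 : Tge φ (Set.Ioi (φ N)) ⊆ TgeSet φ q := by
      rw [← hTsq]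
      exact fun X hX =>
        ExtClosure_mono (S₂ := {W | Semistable φ W ∧ φ N ≤ φ W})
          (fun W hW => ⟨hW.1, le_of_lt hW.2⟩) hX
    rcases hcovmax _ (tge_isTorsionClass φ hφ (fun a b ha hab => lt_of_lt_of_le ha hab)) h1 h2
      with h | h
    · exact h
    · exact absurd (h.symm ▸ hNmem_q) hNnot_gt
  refine ⟨N, hNst, hTsq, ?_, ?_, hq_s, hs_p⟩
  · -- uniqueness up to isomorphism
    intro N' hN'st hN'T
    by_contra hiso
    have hN'ss : Semistable φ N' := StableObj.semistable φ hφ hN'st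
    have hN'mem : N' ∈ TgeSet φ (φ N') := .of N' ⟨hN'ss, le_rfl⟩
    have hN'mem_q : N' ∈ TgeSet φ q := hN'T ▸ hN'mem
    have hphase : φ N' = φ N := by
      have h1 : φ N ≤ φ N' := by
        have hmem : N' ∈ TgeSet φ (φ N) := hTsq.symm ▸ hN'mem_q
        obtain ⟨U, m, hm, hU, hUS⟩ := exists_gen_sub hmem hN'st.1
        exact le_trans hUS.2 (hN'ss.2 m hm hU)
      have h2 : φ N' ≤ φ N := by
        have hmem : N ∈ TgeSet φ (φ N') := hN'T.symm ▸ hNmem_q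
        obtain ⟨U, m, hm, hU, hUS⟩ := exists_gen_sub hmem hNst.1
        exact le_trans hUS.2 (hNss.2 m hm hU)
      exact le_antisymm h2 h1
    have hhom : ∀ h : N ⟶ N', h = 0 := by
      intro h
      by_contra hh
      have hInz := image_not_isZero_of_ne_zero hh
      by_cases hiso₁ : IsIso (Abelian.factorThruImage h)
      · haveI := hiso₁
        haveI hmono : Mono h := by
          rw [← Abelian.image.fac h]
          exact mono_comp _ _
        by_cases hIso : IsIso h
        · exact hiso ⟨asIso h⟩
        · have hlt := hN'st.2 h hmono hNst.1 hIso
          rw [hphase] at hlt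
          exact lt_irrefl _ hlt
      · have hφI : φ N < φ (Abelian.image h) := phase_lt_of_epi_of_stable φ hφ
          (Abelian.factorThruImage h) hNst (not_isZero_kernel_of_not_isIso _ hiso₁) hInz
        have hle2 : φ (Abelian.image h) ≤ φ N' :=
          hN'ss.2 (Abelian.image.ι h) inferInstance hInz
        rw [hphase] at hle2
        exact absurd hφI (not_lt.mpr hle2)
    have hS₀ : IsTorsionClass {W : C | W ∈ TgeSet φ q ∧ ∀ h : W ⟶ N', h = 0} :=
      homZero_isTorsionClass hTCq N'
    have hpS₀ : TgeSet φ p ⊆ {W : C | W ∈ TgeSet φ q ∧ ∀ h : W ⟶ N', h = 0} := by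
      intro W hW
      refine ⟨hsub hW, fun h => ?_⟩
      by_contra hh
      have hInz := image_not_isZero_of_ne_zero hh
      have hImem : Abelian.image h ∈ TgeSet φ p :=
        hTCp.quot_closed (Abelian.factorThruImage h) inferInstance hW
      obtain ⟨U, m, hm, hU, hUS⟩ := exists_gen_sub hImem hInz
      haveI := hm
      have hUle : φ U ≤ φ N' := hN'ss.2 (m ≫ Abelian.image.ι h) (mono_comp _ _) hU
      rw [hphase] at hUle
      exact absurd (lt_of_lt_of_le hs_p hUS.2) (not_lt.mpr hUle)
    rcases hcovmax _ hS₀ hpS₀ (fun W hW => hW.1) with h | h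
    · exact hNnotp (h ▸ (⟨hNmem_q, hhom⟩ : N ∈ {W : C | W ∈ TgeSet φ q ∧ ∀ h : W ⟶ N', h = 0}))
    · have hN'S : N' ∈ {W : C | W ∈ TgeSet φ q ∧ ∀ h : W ⟶ N', h = 0} := h.symm ▸ hN'mem_q
      exact hN'st.1 (by rw [IsZero.iff_id_eq_zero]; exact hN'S.2 (𝟙 N'))
  · -- minimal extending object
    refine ⟨?_, ?_, ?_⟩
    · intro Y' pr hpr hprIso
      by_cases hz : IsZero Y'
      · exact ExtClosure.zero Y' hz
      · rw [← hTgt]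
        exact mem_of_epi_of_stable φ hφ hNst pr hpr hprIso hz
    · intro X Tt f g hseq hTt hnosplit
      haveI := hseq.mono_f
      haveI := hseq.epi_g
      obtain ⟨V, hVmem, hVmax⟩ := exists_torsion_part hTCp X
      by_cases hF : IsZero (cokernel V.arrow)
      · haveI : Epi V.arrow := Preadditive.epi_of_isZero_cokernel _ hF
        haveI : IsIso V.arrow := isIso_of_mono_of_epi _
        exact hTCp.iso_closed (asIso V.arrow) hVmem
      · exfalso
        by_cases hh : f ≫ cokernel.π V.arrow = 0
        · obtain ⟨v, hv⟩ := hseq.desc (cokernel.π V.arrow) hh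
          have hvnz : v ≠ 0 := by
            intro h0
            rw [h0, comp_zero] at hv
            exact hF (isZero_of_epi_eq_zero (cokernel.π V.arrow) hv.symm)
          have hInz := image_not_isZero_of_ne_zero hvnz
          have hImem : Abelian.image v ∈ TgeSet φ p :=
            hTCp.quot_closed (Abelian.factorThruImage v) inferInstance hTt
          exact hInz (hVmax _ (Abelian.image.ι v) inferInstance hImem)
        · have hInz := image_not_isZero_of_ne_zero hh
          by_cases hiso₁ : IsIso (Abelian.factorThruImage (f ≫ cokernel.π V.arrow))
          · haveI := hiso₁
            haveI hmono : Mono (f ≫ cokernel.π V.arrow) := by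
              rw [← Abelian.image.fac (f ≫ cokernel.π V.arrow)]
              exact mono_comp _ _
            by_cases hT₃ : IsZero (cokernel (f ≫ cokernel.π V.arrow))
            · haveI : Epi (f ≫ cokernel.π V.arrow) := Preadditive.epi_of_isZero_cokernel _ hT₃
              haveI : IsIso (f ≫ cokernel.π V.arrow) := isIso_of_mono_of_epi _
              refine hnosplit ⟨cokernel.π V.arrow ≫ inv (f ≫ cokernel.π V.arrow), ?_⟩
              rw [← Category.assoc, IsIso.hom_inv_id]
            · have hfc : f ≫ (cokernel.π V.arrow ≫ cokernel.π (f ≫ cokernel.π V.arrow)) = 0 := by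
                rw [← Category.assoc, cokernel.condition]
              obtain ⟨w, hw⟩ := hseq.desc _ hfc
              haveI : Epi (cokernel.π V.arrow ≫ cokernel.π (f ≫ cokernel.π V.arrow)) :=
                epi_comp _ _
              haveI : Epi (g ≫ w) := by rw [hw]; infer_instance
              have hT₃mem : cokernel (f ≫ cokernel.π V.arrow) ∈ TgeSet φ p :=
                hTCp.quot_closed w (epi_of_epi g w) hTt
              have hφT₃ : p ≤ φ (cokernel (f ≫ cokernel.π V.arrow)) := by
                rw [TgeSet_eq_Tge] at hT₃mem
                obtain ⟨b, hb, hb'⟩ := exists_le_phase φ hφ hT₃mem hT₃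
                exact le_trans hb hb'
              rcases hφ.seesaw _ _ (isSES_cokernel (f ≫ cokernel.π V.arrow)) hNst.1 hF hT₃
                with ⟨h1, h2⟩ | ⟨h1, h2⟩ | ⟨h1, h2⟩
              · exact absurd (h1.trans h2) (ne_of_lt (lt_of_lt_of_le hs_p hφT₃))
              · by_cases hssF : Semistable φ (cokernel V.arrow)
                · have hmemF : cokernel V.arrow ∈ Tge φ (Set.Ioi (φ N)) := .of _ ⟨hssF, h1⟩
                  rw [hTgt] at hmemF
                  exact hF (hVmax _ (𝟙 _) inferInstance hmemF)
                · obtain ⟨L, l, hl, hLnz, hφL⟩ := exists_destab φ hF hssF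
                  obtain ⟨U, m, hm, hUss, hUφ⟩ := exists_ss_sub φ hφ L hLnz
                  haveI := hl; haveI := hm
                  have hmemU : U ∈ Tge φ (Set.Ioi (φ N)) :=
                    .of _ ⟨hUss, lt_trans h1 (lt_of_lt_of_le hφL hUφ)⟩
                  rw [hTgt] at hmemU
                  exact hUss.1 (hVmax _ (m ≫ l) (mono_comp _ _) hmemU)
              · exact absurd (h1.trans (h2.trans (lt_of_lt_of_le hs_p hφT₃))) (lt_irrefl _)
          · have hImem : Abelian.image (f ≫ cokernel.π V.arrow) ∈ Tge φ (Set.Ioi (φ N)) :=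
              mem_of_epi_of_stable φ hφ hNst (Abelian.factorThruImage _) inferInstance hiso₁ hInz
            rw [hTgt] at hImem
            exact hInz (hVmax _ (Abelian.image.ι _) inferInstance hImem)
    · intro W hW h
      by_contra hh
      have hInz := image_not_isZero_of_ne_zero hh
      have hImem : Abelian.image h ∈ TgeSet φ p :=
        hTCp.quot_closed (Abelian.factorThruImage h) inferInstance hW
      obtain ⟨U, m, hm, hU, hUS⟩ := exists_gen_sub hImem hInz
      haveI := hm
      have hUle : φ U ≤ φ N := hNss.2 (m ≫ Abelian.image.ι h) (mono_comp _ _) hU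
      exact absurd (lt_of_lt_of_le hs_p hUS.2) (not_lt.mpr hUle)
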